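/- arXiv:1705.09255 — 6 statements merged into one kernel-verified Lean document; each statement's English description precedes it below -/
import Mathlib

section
/- Under hypotheses (i) and (ii) below, every point of ℂ × ℂ other than the origin is a regular point of p viewed as a map ℝ⁴ → ℝ²: for every (u,v) ≠ (0,0), the real Fréchet derivative fderiv ℝ p (u,v) : ℂ × ℂ → ℂ is a surjective ℝ-linear map. Hence the origin is an isolated singular point of p. -/
open Complex
open Finset
set_option maxHeartbeats 1000000

private noncomputable def epsf (c : ℝ) (γ : ℝ → ℂ) : ℂ → ℂ :=
  fun v => if v = 0 then 0 else (‖v‖ ^ c : ℝ) • γ (Complex.arg v)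

private lemma epsf_zero (c : ℝ) (γ : ℝ → ℂ) : epsf c γ 0 = 0 := by simp [epsf]

private lemma epsf_ne (c : ℝ) (γ : ℝ → ℂ) (v : ℂ) (hv : v ≠ 0) :
    epsf c γ v = (‖v‖ ^ c : ℝ) • γ (Complex.arg v) := by simp [epsf, hv]

private lemma eps_deriv (c : ℝ) (hc : 2 ≤ c) (γ : ℝ → ℂ) (hγ : ContDiff ℝ 1 γ) :
    HasFDerivAt (epsf c γ) (0 : ℂ →L[ℝ] ℂ) 0 := by
  unfold epsf
  obtain ⟨M, hM⟩ := (isCompact_Icc (a := -Real.pi) (b := Real.pi)).exists_bound_of_continuousOn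
    ((hγ.continuous).continuousOn (s := Set.Icc (-Real.pi) Real.pi))
  set M' : ℝ := max M 1 with hM'def
  have hM'pos : 0 < M' := lt_of_lt_of_le one_pos (le_max_right _ _)
  have hbound : ∀ v : ℂ, v ≠ 0 → ‖(‖v‖ ^ c : ℝ) • γ (Complex.arg v)‖ ≤ ‖v‖ ^ c * M' := by
    intro v hv
    rw [norm_smul]
    have h1 : ‖γ (Complex.arg v)‖ ≤ M' :=
      le_trans (hM _ ⟨(Complex.neg_pi_lt_arg v).le, Complex.arg_le_pi v⟩) (le_max_left _ _)
    have h2 : (0:ℝ) ≤ ‖v‖ ^ c := Real.rpow_nonneg (norm_nonneg v) c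
    calc ‖(‖v‖ ^ c : ℝ)‖ * ‖γ (Complex.arg v)‖ = ‖v‖ ^ c * ‖γ (Complex.arg v)‖ := by
          rw [Real.norm_of_nonneg h2]
      _ ≤ ‖v‖ ^ c * M' := by exact mul_le_mul_of_nonneg_left h1 h2
  rw [hasFDerivAt_iff_isLittleO_nhds_zero]
  simp only [zero_add, eq_self_iff_true, if_true, ContinuousLinearMap.zero_apply, sub_zero]
  rw [Asymptotics.isLittleO_iff]
  intro C hC
  rw [Metric.eventually_nhds_iff]
  refine ⟨min 1 (C / M'), lt_min one_pos (div_pos hC hM'pos), fun {v} hv => ?_⟩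
  rw [dist_zero_right] at hv
  by_cases h0 : v = 0
  · simp [h0]
  · rw [if_neg h0]
    have hvpos : 0 < ‖v‖ := norm_pos_iff.mpr h0
    have hle1 : ‖v‖ ≤ 1 := le_of_lt (lt_of_lt_of_le hv (min_le_left _ _))
    have h3 : ‖v‖ ^ c ≤ ‖v‖ ^ (2:ℝ) :=
      Real.rpow_le_rpow_of_exponent_ge hvpos hle1 hc
    have h4 : ‖v‖ ^ (2:ℝ) = ‖v‖ * ‖v‖ := by
      rw [show (2:ℝ) = ((2:ℕ):ℝ) by norm_num, Real.rpow_natCast]; ring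
    calc ‖(‖v‖ ^ c : ℝ) • γ (Complex.arg v)‖ ≤ ‖v‖ ^ c * M' := hbound v h0
      _ ≤ (‖v‖ * ‖v‖) * M' := by
          apply mul_le_mul_of_nonneg_right _ hM'pos.le; rw [← h4]; exact h3
      _ ≤ (C / M' * ‖v‖) * M' := by
          apply mul_le_mul_of_nonneg_right _ hM'pos.le
          exact mul_le_mul_of_nonneg_right (le_of_lt (lt_of_lt_of_le hv (min_le_right _ _)))
            (norm_nonneg v)
      _ = C * ‖v‖ := by field_simp

/-- Under the disjoint-strand hypothesis and the absence of
argument-critical points of the braid polynomial `G`, every point of `ℂ × ℂ`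
other than the origin is a regular point of `p` viewed as a map `ℝ⁴ → ℝ²`. -/
theorem stmt_0 (s : ℕ) (hs : 1 ≤ s) (c : ℝ) (hc : 2 ≤ c)
    (γ : Fin s → ℝ → ℂ) (hγ : ∀ j, ContDiff ℝ 1 (γ j))
    (σ : Equiv.Perm (Fin s))
    (hσ : ∀ j t, γ j (t + 2 * Real.pi) = γ (σ j) t)
    (p : ℂ × ℂ → ℂ)
    (hp0 : ∀ u : ℂ, p (u, 0) = u ^ s)
    (hp : ∀ u v : ℂ, v ≠ 0 →
      p (u, v) = ∏ j, (u - (‖v‖ ^ c : ℝ) • γ j (Complex.arg v)))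
    (G : ℂ × ℝ → ℂ)
    (hG : ∀ (u : ℂ) (t : ℝ), G (u, t) = ∏ j, (u - γ j t))
    (hinj : ∀ t : ℝ, Function.Injective fun j => γ j t)
    (hreg : ∀ (u : ℂ) (t : ℝ), G (u, t) ≠ 0 →
      deriv (fun w => G (w, t)) u ≠ 0 ∨
      (deriv (fun τ => G (u, τ)) t / G (u, t)).im ≠ 0) :
    ∀ u v : ℂ, (u, v) ≠ (0, 0) → Function.Surjective (fderiv ℝ p (u, v)) := by
  have hs0 : (s : ℂ) ≠ 0 := Nat.cast_ne_zero.mpr (by omega)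
  intro u0 v0 hne
  by_cases hv0 : v0 = 0
  ---------------------------------------------------------------
  -- CASE v0 = 0 : here u0 ≠ 0 and the derivative is s u0^(s-1) du
  ---------------------------------------------------------------
  · subst hv0
    have hu0 : u0 ≠ 0 := fun h => hne (by simp [h])
    have hpε : p = fun x : ℂ × ℂ => ∏ j, (x.1 - epsf c (γ j) x.2) := by
      funext x
      obtain ⟨u, v⟩ := x
      by_cases h : v = 0
      · subst h
        simp only [epsf_zero, sub_zero, prod_const, card_univ, Fintype.card_fin]
        exact hp0 u
      · rw [hp u v h]
        exact Finset.prod_congr rfl (fun j _ => by rw [epsf_ne c (γ j) v h])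
    have hg : ∀ j : Fin s, HasFDerivAt (fun x : ℂ × ℂ => x.1 - epsf c (γ j) x.2)
        (ContinuousLinearMap.fst ℝ ℂ ℂ) (u0, 0) := by
      intro j
      have h1 := (hasFDerivAt_fst (p := ((u0, 0) : ℂ × ℂ))).sub
        ((eps_deriv c hc (γ j) (hγ j)).comp (f := Prod.snd) (u0, (0:ℂ))
          (hasFDerivAt_snd (𝕜 := ℝ) (p := ((u0, (0:ℂ)) : ℂ × ℂ))))
      exact h1.congr_fderiv (by simp)
    have hq := HasFDerivAt.finset_prod (u := Finset.univ)
      (fun j (_ : j ∈ Finset.univ) => hg j)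
    have hfd : fderiv ℝ p (u0, 0) = ∑ j, (∏ k ∈ Finset.univ.erase j, (u0 - epsf c (γ k) 0)) •
        (ContinuousLinearMap.fst ℝ ℂ ℂ) := by
      rw [hpε]; exact hq.fderiv
    have hPj : ∀ j : Fin s, (∏ k ∈ Finset.univ.erase j, (u0 - epsf c (γ k) 0)) = u0 ^ (s - 1) := by
      intro j
      have : ∀ k ∈ Finset.univ.erase j, u0 - epsf c (γ k) 0 = u0 := fun k _ => by
        simp [epsf_zero]
      rw [Finset.prod_congr rfl this, prod_const, Finset.card_erase_of_mem (mem_univ j),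
        card_univ, Fintype.card_fin]
    set A : ℂ := (s : ℂ) * u0 ^ (s - 1) with hAdef
    have hA : A ≠ 0 := mul_ne_zero hs0 (pow_ne_zero _ hu0)
    intro w
    refine ⟨(A⁻¹ * w, 0), ?_⟩
    rw [hfd]
    simp only [ContinuousLinearMap.sum_apply, ContinuousLinearMap.smul_apply,
      ContinuousLinearMap.coe_fst', hPj, smul_eq_mul, Finset.sum_const, card_univ,
      Fintype.card_fin, nsmul_eq_mul]
    field_simp [hAdef]
    ring
  ---------------------------------------------------------------
  -- CASE v0 ≠ 0
  ---------------------------------------------------------------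
  · -- the 2π-shift invariance of the strand product
    have prodshift : ∀ (u : ℂ) (r : ℝ) (t : ℝ),
        ∏ j, (u - r • γ j (t + 2 * Real.pi)) = ∏ j, (u - r • γ j t) := by
      intro u r t
      simp only [hσ]
      exact Equiv.prod_comp σ (fun j => u - r • γ j t)
    -- choose a branch: e = ±1, shift δ
    obtain ⟨e, δ, hee, hmem, hrep⟩ :
        ∃ (e : ℂ) (δ : ℝ), e * e = 1 ∧ e * v0 ∈ Complex.slitPlane ∧
          ∀ u v : ℂ, v ≠ 0 →
            p (u, v) = ∏ j, (u - (‖v‖ ^ c : ℝ) • γ j (Complex.arg (e * v) + δ)) := by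
      by_cases hsp : v0 ∈ Complex.slitPlane
      · exact ⟨1, 0, one_mul 1, by simpa using hsp,
          fun u v hv => by simpa using hp u v hv⟩
      · refine ⟨-1, Real.pi, by norm_num, ?_, ?_⟩
        · rw [Complex.mem_slitPlane_iff] at hsp ⊢
          push_neg at hsp
          have h1 : v0.re < 0 := by
            rcases lt_or_eq_of_le hsp.1 with h | h
            · exact h
            · exact absurd (Complex.ext (by simpa using h) (by simpa using hsp.2)) hv0
          left
          simp [h1]
        · intro u v hv
          rw [hp u v hv, neg_one_mul]
          rcases lt_trichotomy v.im 0 with him | him | him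
          · rw [show Complex.arg (-v) + Real.pi = Complex.arg v + 2 * Real.pi by
              rw [Complex.arg_neg_eq_arg_add_pi_of_im_neg him]; ring, prodshift]
          · have hre : v.re ≠ 0 := fun h => hv (Complex.ext h him)
            rcases lt_or_gt_of_ne hre with h | h
            · rw [show Complex.arg (-v) + Real.pi = Complex.arg v by
                rw [Complex.arg_eq_pi_iff.2 ⟨h, him⟩,
                  show Complex.arg (-v) = 0 from Complex.arg_eq_zero_iff.2
                    (by simp [him, h.le])]
                simp]
            · rw [show Complex.arg (-v) + Real.pi = Complex.arg v + 2 * Real.pi by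
                rw [Complex.arg_eq_pi_iff.2 (by simp [him, h]),
                  show Complex.arg v = 0 from Complex.arg_eq_zero_iff.2 (by simp [him, h.le])]
                ring, prodshift]
          · rw [show Complex.arg (-v) + Real.pi = Complex.arg v by
              rw [Complex.arg_neg_eq_arg_sub_pi_of_im_pos him]; ring]
    have hv0' : v0 ≠ 0 := hv0
    have he0 : e ≠ 0 := fun h => by simp [h] at hee
    have he1 : ‖e‖ = 1 := by
      have h := congrArg norm hee
      rw [norm_mul, norm_one] at h
      rcases mul_self_eq_one_iff.mp h with h' | h'
      · exact h'
      · nlinarith [norm_nonneg e]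
    -- the fixed branch of the logarithm
    set LD : ℂ →L[ℝ] ℂ := ((1 : ℂ →L[ℂ] ℂ).smulRight v0⁻¹).restrictScalars ℝ with hLDdef
    have hLD : HasFDerivAt (fun v => Complex.log (e * v)) LD v0 := by
      have h1 : HasDerivAt (fun v => Complex.log (e * v)) ((e * v0)⁻¹ * e) v0 :=
        (Complex.hasDerivAt_log hmem).comp v0 (by simpa using (hasDerivAt_id v0).const_mul e)
      have h2 : (e * v0)⁻¹ * e = v0⁻¹ := by field_simp
      rw [h2] at h1
      exact h1.hasFDerivAt.restrictScalars ℝ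
    have hLDapp : ∀ dv, LD dv = dv * v0⁻¹ := by
      intro dv; simp [hLDdef, ContinuousLinearMap.smulRight_apply, smul_eq_mul]
    set E : ℂ → ℝ := fun v => Real.exp (c * (Complex.log (e * v)).re) with hEdef
    set Θ : ℂ → ℝ := fun v => (Complex.log (e * v)).im + δ with hΘdef
    set DE : ℂ →L[ℝ] ℝ := E v0 • (c • (Complex.reCLM.comp LD)) with hDEdef
    have hE : HasFDerivAt E DE v0 := by
      have hinner : HasFDerivAt (fun v => c * (Complex.log (e * v)).re)
          (c • (Complex.reCLM.comp LD)) v0 :=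
        (Complex.reCLM.hasFDerivAt.comp v0 hLD).const_mul c
      exact (Real.hasDerivAt_exp _).comp_hasFDerivAt v0 hinner
    set DΘ : ℂ →L[ℝ] ℝ := Complex.imCLM.comp LD with hDΘdef
    have hΘ : HasFDerivAt Θ DΘ v0 :=
      (Complex.imCLM.hasFDerivAt.comp v0 hLD).add_const δ
    have hγder : ∀ j, HasFDerivAt (γ j)
        ((1 : ℝ →L[ℝ] ℝ).smulRight (deriv (γ j) (Θ v0))) (Θ v0) := fun j =>
      (((hγ j).differentiable one_ne_zero) (Θ v0)).hasDerivAt.hasFDerivAt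
    set Dψ : Fin s → (ℂ →L[ℝ] ℂ) := fun j =>
      E v0 • (((1 : ℝ →L[ℝ] ℝ).smulRight (deriv (γ j) (Θ v0))).comp DΘ)
        + DE.smulRight (γ j (Θ v0)) with hDψdef
    have hψ : ∀ j, HasFDerivAt (fun v => E v • γ j (Θ v)) (Dψ j) v0 := fun j =>
      hE.smul ((hγder j).comp v0 hΘ)
    have hv0inv : v0 * v0⁻¹ = 1 := mul_inv_cancel₀ hv0'
    have hiv0inv : Complex.I * v0 * v0⁻¹ = Complex.I := by field_simp
    have hev1 : ∀ j, Dψ j v0 = (c * E v0) • γ j (Θ v0) := by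
      intro j
      simp [hDψdef, hDEdef, hDΘdef, ContinuousLinearMap.smulRight_apply, hLDapp, hv0inv,
        smul_smul]
      ring_nf
      exact Or.inl trivial
    have hev2 : ∀ j, Dψ j (Complex.I * v0) = E v0 • deriv (γ j) (Θ v0) := by
      intro j
      simp [hDψdef, hDEdef, hDΘdef, ContinuousLinearMap.smulRight_apply, hLDapp, hiv0inv]
    -- the local smooth model of p
    set g : Fin s → ℂ × ℂ → ℂ := fun j x => x.1 - E x.2 • γ j (Θ x.2) with hgdef
    have hpq : p =ᶠ[nhds (u0, v0)] fun x : ℂ × ℂ => ∏ j, g j x := by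
      have hU : IsOpen {x : ℂ × ℂ | e * x.2 ∈ Complex.slitPlane} :=
        Complex.isOpen_slitPlane.preimage (continuous_const.mul continuous_snd)
      refine Filter.eventuallyEq_of_mem (hU.mem_nhds hmem) ?_
      rintro ⟨u, v⟩ hx
      simp only [Set.mem_setOf_eq] at hx
      have hvne : v ≠ 0 := by
        intro h; exact Complex.slitPlane_ne_zero hx (by rw [h, mul_zero])
      rw [hrep u v hvne]
      refine Finset.prod_congr rfl (fun j _ => ?_)
      have habs : ‖e * v‖ = ‖v‖ := by
        rw [norm_mul, he1, one_mul]
      have hEv : E v = ‖v‖ ^ c := by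
        simp only [hEdef]
        rw [Complex.log_re, habs, Real.rpow_def_of_pos (norm_pos_iff.mpr hvne)]
        ring_nf
      have hΘv : Θ v = Complex.arg (e * v) + δ := by
        simp only [hΘdef, Complex.log_im]
      simp only [hgdef]
      rw [hEv, hΘv]
    set Dg : Fin s → (ℂ × ℂ →L[ℝ] ℂ) := fun j =>
      ContinuousLinearMap.fst ℝ ℂ ℂ - (Dψ j).comp (ContinuousLinearMap.snd ℝ ℂ ℂ)
      with hDgdef
    have hgd : ∀ j, HasFDerivAt (g j) (Dg j) (u0, v0) := fun j =>
      by
        have h1 := (hasFDerivAt_fst (𝕜 := ℝ) (p := ((u0, v0) : ℂ × ℂ))).sub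
          ((hψ j).comp (f := Prod.snd) (u0, v0) (hasFDerivAt_snd (𝕜 := ℝ) (p := ((u0, v0) : ℂ × ℂ))))
        exact h1
    have hq := HasFDerivAt.finset_prod (u := Finset.univ)
      (fun j (_ : j ∈ Finset.univ) => hgd j)
    have hfd : fderiv ℝ p (u0, v0) =
        ∑ j, (∏ k ∈ Finset.univ.erase j, g k (u0, v0)) • Dg j := by
      rw [hpq.fderiv_eq]
      exact hq.fderiv
    have hLapp : ∀ du dv : ℂ,
        (∑ j, (∏ k ∈ Finset.univ.erase j, g k (u0, v0)) • Dg j) (du, dv)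
          = ∑ j, (∏ k ∈ Finset.univ.erase j, g k (u0, v0)) * (du - Dψ j dv) := by
      intro du dv
      simp [hDgdef, ContinuousLinearMap.sum_apply, ContinuousLinearMap.smul_apply,
        ContinuousLinearMap.sub_apply, ContinuousLinearMap.comp_apply,
        ContinuousLinearMap.coe_fst', ContinuousLinearMap.coe_snd', smul_eq_mul]
    -- renormalised quantities
    have hE0pos : (0:ℝ) < E v0 := Real.exp_pos _
    set Ec : ℂ := ((E v0 : ℝ) : ℂ) with hEcdef
    have hEc0 : Ec ≠ 0 := Complex.ofReal_ne_zero.mpr (ne_of_gt hE0pos)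
    set w0 : ℂ := u0 / Ec with hw0def
    have hfk : ∀ k, g k (u0, v0) = Ec * (w0 - γ k (Θ v0)) := by
      intro k
      simp only [hgdef, hw0def, Complex.real_smul, hEcdef]
      field_simp [ne_of_gt hE0pos]
    set Q : Fin s → ℂ := fun j => ∏ k ∈ Finset.univ.erase j, (w0 - γ k (Θ v0)) with hQdef
    set G0 : ℂ := ∏ j, (w0 - γ j (Θ v0)) with hG0def
    set Gd : ℂ := ∑ j, Q j with hGddef
    set Gt : ℂ := -∑ j, Q j * deriv (γ j) (Θ v0) with hGtdef
    have hP : ∀ j, (∏ k ∈ Finset.univ.erase j, g k (u0, v0)) = Ec ^ (s - 1) * Q j := by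
      intro j
      rw [Finset.prod_congr rfl (fun k _ => hfk k), Finset.prod_mul_distrib,
        Finset.prod_const, Finset.card_erase_of_mem (mem_univ j), card_univ,
        Fintype.card_fin, hQdef]
    have hEs : Ec ^ (s - 1) * Ec = Ec ^ s := by
      rw [← pow_succ]; congr 1; omega
    have hQG : ∀ j, (w0 - γ j (Θ v0)) * Q j = G0 := by
      intro j
      simp only [hQdef, hG0def]
      exact Finset.mul_prod_erase Finset.univ (fun k => w0 - γ k (Θ v0)) (mem_univ j)
    have hkey : ∑ j, Q j * γ j (Θ v0) = w0 * Gd - s * G0 := by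
      have h1 : ∀ j, Q j * γ j (Θ v0) = w0 * Q j - G0 := fun j => by
        linear_combination -hQG j
      rw [Finset.sum_congr rfl (fun j _ => h1 j), Finset.sum_sub_distrib,
        ← Finset.mul_sum, Finset.sum_const, card_univ, Fintype.card_fin,
        nsmul_eq_mul, hGddef]
    -- the three directional values of the derivative
    have hLu : ∀ du : ℂ,
        (∑ j, (∏ k ∈ Finset.univ.erase j, g k (u0, v0)) • Dg j) (du, 0)
          = Ec ^ (s - 1) * Gd * du := by
      intro du
      rw [hLapp du 0]
      simp only [map_zero, sub_zero]
      simp_rw [hP]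
      rw [← Finset.sum_mul, ← Finset.mul_sum, hGddef]
    have hLv : (∑ j, (∏ k ∈ Finset.univ.erase j, g k (u0, v0)) • Dg j) (0, v0)
        = -((c : ℂ) * Ec ^ s) * (w0 * Gd - s * G0) := by
      rw [hLapp 0 v0]
      have h1 : ∀ j, (∏ k ∈ Finset.univ.erase j, g k (u0, v0)) * (0 - Dψ j v0)
          = -((c : ℂ) * Ec ^ s) * (Q j * γ j (Θ v0)) := by
        intro j
        rw [hP j, hev1 j]
        rw [Complex.real_smul]
        push_cast
        linear_combination (-(c:ℂ) * Q j * γ j (Θ v0)) * hEs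
      rw [Finset.sum_congr rfl (fun j _ => h1 j), ← Finset.mul_sum, hkey]
    have hLiv : (∑ j, (∏ k ∈ Finset.univ.erase j, g k (u0, v0)) • Dg j) (0, Complex.I * v0)
        = Ec ^ s * Gt := by
      rw [hLapp 0 (Complex.I * v0)]
      have h1 : ∀ j, (∏ k ∈ Finset.univ.erase j, g k (u0, v0)) * (0 - Dψ j (Complex.I * v0))
          = -(Ec ^ s * (Q j * deriv (γ j) (Θ v0))) := by
        intro j
        rw [hP j, hev2 j, Complex.real_smul]
        linear_combination (-(Q j) * deriv (γ j) (Θ v0)) * hEs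
      rw [Finset.sum_congr rfl (fun j _ => h1 j), Finset.sum_neg_distrib,
        ← Finset.mul_sum, hGtdef]
      ring
    -- derivatives of the braid polynomial
    have hGw : HasDerivAt (fun w => G (w, Θ v0)) Gd w0 := by
      have hfun : (fun w => G (w, Θ v0)) = fun w => ∏ j, (w - γ j (Θ v0)) :=
        funext fun w => hG w (Θ v0)
      rw [hfun]
      have h := HasDerivAt.finset_prod (u := Finset.univ)
        (fun (j : Fin s) (_ : j ∈ Finset.univ) => (hasDerivAt_id w0).sub_const (γ j (Θ v0)))
      convert h using 1
      · rfl
      · rfl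
      · funext w; simp
      · simp [hGddef, hQdef, smul_eq_mul]
    have hGt' : HasDerivAt (fun τ => G (w0, τ)) Gt (Θ v0) := by
      have hfun : (fun τ => G (w0, τ)) = fun τ => ∏ j, (w0 - γ j τ) :=
        funext fun τ => hG w0 τ
      rw [hfun]
      have hd : ∀ j, HasDerivAt (fun τ => w0 - γ j τ) (-(deriv (γ j) (Θ v0))) (Θ v0) :=
        fun j => (((hγ j).differentiable one_ne_zero) (Θ v0)).hasDerivAt.const_sub w0
      have h := HasDerivAt.finset_prod (u := Finset.univ)
        (fun (j : Fin s) (_ : j ∈ Finset.univ) => hd j)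
      convert h using 1
      · rfl
      · funext w; simp
      rw [hGtdef]
      rw [← Finset.sum_neg_distrib]
      refine Finset.sum_congr rfl (fun j _ => ?_)
      simp [hQdef, smul_eq_mul]
    -- case analysis on the vanishing of G_w
    by_cases hGdz : Gd = 0
    · -- need the argument-direction regularity
      have hG0ne : G0 ≠ 0 := by
        intro hG00
        obtain ⟨j0, -, hj0⟩ := Finset.prod_eq_zero_iff.mp (hG0def ▸ hG00)
        have hw0j : w0 = γ j0 (Θ v0) := sub_eq_zero.mp hj0
        have hQj0 : Q j0 ≠ 0 := by
          simp only [hQdef]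
          refine Finset.prod_ne_zero_iff.mpr (fun k hk => ?_)
          intro hzero
          refine (Finset.ne_of_mem_erase hk) (hinj (Θ v0) ?_)
          show γ k (Θ v0) = γ j0 (Θ v0)
          rw [← sub_eq_zero.mp hzero, hw0j]
        have hsum : Gd = Q j0 := by
          rw [hGddef]
          refine Finset.sum_eq_single_of_mem j0 (mem_univ j0) (fun k _ hk => ?_)
          simp only [hQdef]
          exact Finset.prod_eq_zero (Finset.mem_erase.mpr ⟨Ne.symm hk, mem_univ j0⟩) hj0
        exact hQj0 (hsum ▸ hGdz)
      have hGne : G (w0, Θ v0) ≠ 0 := by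
        rw [hG w0 (Θ v0), ← hG0def]; exact hG0ne
      have hIm : (Gt / G0).im ≠ 0 := by
        rcases hreg w0 (Θ v0) hGne with h1 | h2
        · rw [hGw.deriv] at h1; exact absurd hGdz h1
        · rwa [hGt'.deriv, hG w0 (Θ v0), ← hG0def] at h2
      set K : ℂ := Ec ^ s * G0 with hKdef
      have hK0 : K ≠ 0 := mul_ne_zero (pow_ne_zero _ hEc0) hG0ne
      set ζ : ℂ := Gt / G0 with hζdef
      have haval : (∑ j, (∏ k ∈ Finset.univ.erase j, g k (u0, v0)) • Dg j) (0, v0)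
          = ((c : ℂ) * (s : ℂ)) * K := by
        rw [hLv, hGdz, hKdef]; ring
      have hbval : (∑ j, (∏ k ∈ Finset.univ.erase j, g k (u0, v0)) • Dg j) (0, Complex.I * v0)
          = K * ζ := by
        rw [hLiv, hKdef, hζdef]; field_simp
      intro wt
      set m : ℂ := wt / K with hmdef
      set y : ℝ := m.im / ζ.im with hydef
      set x : ℝ := (m.re - y * ζ.re) / (c * s) with hxdef
      have hcs : c * (s : ℝ) ≠ 0 :=
        mul_ne_zero (by linarith) (Nat.cast_ne_zero.mpr (by omega))
      have claim : (x : ℂ) * ((c : ℂ) * (s : ℂ)) + (y : ℂ) * ζ = m := by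
        apply Complex.ext
        · simp only [Complex.add_re, Complex.mul_re, Complex.ofReal_re, Complex.ofReal_im,
            Complex.mul_im, Complex.ofReal_mul]
          push_cast
          simp only [Complex.natCast_re, Complex.natCast_im, mul_zero, zero_mul, sub_zero, add_zero]
          rw [hxdef]
          field_simp [hxdef, hydef, hIm]
          ring
        · simp only [Complex.add_im, Complex.mul_im, Complex.mul_re, Complex.ofReal_re,
            Complex.ofReal_im]
          push_cast
          simp only [Complex.natCast_re, Complex.natCast_im, mul_zero, zero_mul, sub_zero, add_zero]
          rw [hydef]
          field_simp [hydef, hIm]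
          ring
      refine ⟨(0, x • v0 + y • (Complex.I * v0)), ?_⟩
      rw [hfd]
      have hsplit : ((0 : ℂ), x • v0 + y • (Complex.I * v0))
          = x • ((0 : ℂ), v0) + y • ((0 : ℂ), Complex.I * v0) := by
        simp [Prod.ext_iff]
      rw [hsplit, map_add, map_smul, map_smul, haval, hbval,
        Complex.real_smul, Complex.real_smul]
      have hm : K * m = wt := by rw [hmdef]; field_simp
      linear_combination K * claim + hm
    · -- the u-direction suffices
      intro wt
      refine ⟨((Ec ^ (s - 1) * Gd)⁻¹ * wt, 0), ?_⟩
      rw [hfd, hLu]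
      have hA : Ec ^ (s - 1) * Gd ≠ 0 := mul_ne_zero (pow_ne_zero _ hEc0) hGdz
      field_simp
end

section
/- Assume that for every t the map j ↦ (X j t, Y j t) is injective (disjoint strands). Then every zero of p other than the origin is a regular point of p : ℝ⁴ → ℝ²: if (u,v) ≠ (0,0) and p(u,v) = 0, then v ≠ 0 and the real Fréchet derivative fderiv ℝ p (u,v) : ℂ × ℂ → ℂ is surjective. Hence p has a weakly isolated singular point at the origin. -/
open Complex

/-- For the map `p = p_{a,b,k}` of Lemma `general`, every zero of
`p` other than the origin has `v ≠ 0` and is a regular point of `p : ℝ⁴ → ℝ²`;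
hence `p` has a weakly isolated singular point at the origin. -/
theorem stmt_1 (s : ℕ) (hs : 1 ≤ s) (a b : ℝ) (ha : 0 < a) (hb : 0 < b)
    (α β : ℝ) (hα : 1 < α) (hβ : 1 < β)
    (X Y : Fin s → ℝ → ℝ)
    (hX : ∀ j, ContDiff ℝ 1 (X j)) (hY : ∀ j, ContDiff ℝ 1 (Y j))
    (σ : Equiv.Perm (Fin s))
    (hσX : ∀ j t, X j (t + 2 * Real.pi) = X (σ j) t)
    (hσY : ∀ j t, Y j (t + 2 * Real.pi) = Y (σ j) t)
    (p : ℂ × ℂ → ℂ)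
    (hp0 : ∀ u : ℂ, p (u, 0) = u ^ s)
    (hp : ∀ u v : ℂ, v ≠ 0 →
      p (u, v) = ∏ j, (u - ((‖v‖ ^ α * a * X j (Complex.arg v) : ℝ) : ℂ)
        - Complex.I * ((‖v‖ ^ β * b * Y j (Complex.arg v) : ℝ) : ℂ)))
    (hinj : ∀ t : ℝ, Function.Injective fun j => (X j t, Y j t)) :
    ∀ u v : ℂ, (u, v) ≠ (0, 0) → p (u, v) = 0 →
      v ≠ 0 ∧ Function.Surjective (fderiv ℝ p (u, v)) := by
  intro u v hne hpz
  have hv : v ≠ 0 := by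
    intro h
    subst h
    rw [hp0 u] at hpz
    have hu : u = 0 := by
      have hs' : s ≠ 0 := by omega
      exact (pow_eq_zero_iff hs').mp hpz
    exact hne (by rw [hu])
  refine ⟨hv, ?_⟩
  -- the roots of `p (·, v)`
  set c : Fin s → ℂ := fun j =>
    ((‖v‖ ^ α * a * X j (Complex.arg v) : ℝ) : ℂ)
      + Complex.I * ((‖v‖ ^ β * b * Y j (Complex.arg v) : ℝ) : ℂ) with hc
  have hnv : (0 : ℝ) < ‖v‖ := norm_pos_iff.mpr hv
  have hra : (0 : ℝ) < ‖v‖ ^ α * a := mul_pos (Real.rpow_pos_of_pos hnv α) ha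
  have hrb : (0 : ℝ) < ‖v‖ ^ β * b := mul_pos (Real.rpow_pos_of_pos hnv β) hb
  have hcinj : Function.Injective c := by
    intro j k h
    rw [hc] at h
    have hre : ‖v‖ ^ α * a * X j (Complex.arg v) = ‖v‖ ^ α * a * X k (Complex.arg v) := by
      have := congrArg Complex.re h
      simpa [Complex.add_re, Complex.mul_re] using this
    have him : ‖v‖ ^ β * b * Y j (Complex.arg v) = ‖v‖ ^ β * b * Y k (Complex.arg v) := by
      have := congrArg Complex.im h
      simpa [Complex.add_im, Complex.mul_im] using this
    have h1 : X j (Complex.arg v) = X k (Complex.arg v) :=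
      mul_left_cancel₀ hra.ne' hre
    have h2 : Y j (Complex.arg v) = Y k (Complex.arg v) :=
      mul_left_cancel₀ hrb.ne' him
    exact hinj (Complex.arg v)
      (show (X j (Complex.arg v), Y j (Complex.arg v))
          = (X k (Complex.arg v), Y k (Complex.arg v)) by rw [h1, h2])
  -- find the root index
  have hprod : ∏ j, (u - c j) = 0 := by
    rw [hp u v hv] at hpz
    rw [← hpz]
    refine Finset.prod_congr rfl fun j _ => ?_
    rw [hc]; ring
  obtain ⟨j0, -, hj0⟩ := Finset.prod_eq_zero_iff.mp hprod
  have huc : u = c j0 := sub_eq_zero.mp hj0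
  -- local smooth model for `p`
  obtain ⟨θ, U, hUo, hvU, hθv, hθd, hagree⟩ :
      ∃ (θ : ℂ → ℝ) (U : Set ℂ), IsOpen U ∧ v ∈ U ∧ θ v = Complex.arg v ∧
        DifferentiableAt ℝ θ v ∧ ∀ (u' v' : ℂ), v' ∈ U →
          p (u', v') = ∏ j, (u' - ((‖v'‖ ^ α * a * X j (θ v') : ℝ) : ℂ)
            - Complex.I * ((‖v'‖ ^ β * b * Y j (θ v') : ℝ) : ℂ)) := by
    by_cases hsp : v ∈ Complex.slitPlane
    · refine ⟨Complex.arg, Complex.slitPlane, Complex.isOpen_slitPlane, hsp, rfl, ?_, ?_⟩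
      · have hfun : (Complex.arg : ℂ → ℝ) = fun z => (Complex.log z).im := by
          funext z; rw [Complex.log_im]
        rw [hfun]
        exact Complex.imCLM.differentiableAt.comp v
          ((Complex.differentiableAt_log hsp).restrictScalars ℝ)
      · intro u' v' hv'
        exact hp u' v' (Complex.slitPlane_ne_zero hv')
    · have hvre : v.re < 0 ∧ v.im = 0 := by
        rw [Complex.mem_slitPlane_iff] at hsp
        push_neg at hsp
        refine ⟨lt_of_le_of_ne hsp.1 fun h => hv (Complex.ext h hsp.2), hsp.2⟩
      refine ⟨fun z => Complex.arg (-z) + Real.pi, {z : ℂ | z.re < 0},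
        isOpen_lt Complex.continuous_re continuous_const, hvre.1, ?_, ?_, ?_⟩
      · show Complex.arg (-v) + Real.pi = Complex.arg v
        have h1 : Complex.arg (-v) = 0 := Complex.arg_eq_zero_iff.mpr
          ⟨by rw [Complex.neg_re]; linarith [hvre.1], by rw [Complex.neg_im, hvre.2, neg_zero]⟩
        have h2 : Complex.arg v = Real.pi := Complex.arg_eq_pi_iff.mpr ⟨hvre.1, hvre.2⟩
        rw [h1, h2, zero_add]
      · have hfun : (fun z : ℂ => Complex.arg (-z) + Real.pi)
            = fun z => (Complex.log (-z)).im + Real.pi := by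
          funext z; rw [Complex.log_im]
        rw [hfun]
        have hmem : -v ∈ Complex.slitPlane := by
          rw [Complex.mem_slitPlane_iff]
          exact Or.inl (by rw [Complex.neg_re]; linarith [hvre.1])
        have hlog : DifferentiableAt ℝ (fun z : ℂ => Complex.log (-z)) v :=
          ((Complex.differentiableAt_log hmem).restrictScalars ℝ).comp v differentiableAt_id.neg
        exact (Complex.imCLM.differentiableAt.comp v hlog).add_const Real.pi
      · intro u' v' hv'
        have hv'0 : v' ≠ 0 := by
          intro h
          rw [h] at hv'
          simp at hv'
        show p (u', v') = ∏ j, (u' - ((‖v'‖ ^ α * a * X j (Complex.arg (-v') + Real.pi) : ℝ) : ℂ)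
          - Complex.I * ((‖v'‖ ^ β * b * Y j (Complex.arg (-v') + Real.pi) : ℝ) : ℂ))
        rw [hp u' v' hv'0]
        rcases lt_trichotomy v'.im 0 with him | him | him
        · have hθ : Complex.arg (-v') + Real.pi = Complex.arg v' + 2 * Real.pi := by
            rw [Complex.arg_neg_eq_arg_add_pi_of_im_neg him]; ring
          rw [hθ]
          have reind := Equiv.prod_comp σ (fun j =>
            (u' - ((‖v'‖ ^ α * a * X j (Complex.arg v') : ℝ) : ℂ)
              - Complex.I * ((‖v'‖ ^ β * b * Y j (Complex.arg v') : ℝ) : ℂ)))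
          rw [← reind]
          refine Finset.prod_congr rfl fun j _ => ?_
          rw [← hσX j (Complex.arg v'), ← hσY j (Complex.arg v')]
        · have h2 : Complex.arg v' = Real.pi := Complex.arg_eq_pi_iff.mpr ⟨hv', him⟩
          have h1 : Complex.arg (-v') = 0 := Complex.arg_eq_zero_iff.mpr
            ⟨by rw [Complex.neg_re]; linarith [show v'.re < 0 from hv'],
              by rw [Complex.neg_im, him, neg_zero]⟩
          rw [h1, h2, zero_add]
        · have hθ : Complex.arg (-v') + Real.pi = Complex.arg v' := by
            rw [Complex.arg_neg_eq_arg_sub_pi_of_im_pos him]; ring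
          rw [hθ]
  -- the smooth model
  set P : ℂ × ℂ → ℂ := fun q =>
    ∏ j, (q.1 - ((‖q.2‖ ^ α * a * X j (θ q.2) : ℝ) : ℂ)
      - Complex.I * ((‖q.2‖ ^ β * b * Y j (θ q.2) : ℝ) : ℂ)) with hP
  have hev : p =ᶠ[nhds (u, v)] P := by
    have hmem : Prod.snd ⁻¹' U ∈ nhds (u, v) :=
      (hUo.preimage continuous_snd).mem_nhds hvU
    filter_upwards [hmem] with q hq
    calc p q = p (q.1, q.2) := by rw [Prod.mk.eta]
      _ = P q := hagree q.1 q.2 hq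
  -- differentiability of `P`
  have hθq : DifferentiableAt ℝ (fun q : ℂ × ℂ => θ q.2) (u, v) :=
    hθd.comp (u, v) differentiableAt_snd
  have hnq : DifferentiableAt ℝ (fun q : ℂ × ℂ => ‖q.2‖) (u, v) :=
    DifferentiableAt.norm ℝ differentiableAt_snd hv
  have hXd : ∀ j, DifferentiableAt ℝ
      (fun q : ℂ × ℂ => ((‖q.2‖ ^ α * a * X j (θ q.2) : ℝ) : ℂ)) (u, v) := by
    intro j
    have hreal : DifferentiableAt ℝ (fun q : ℂ × ℂ => ‖q.2‖ ^ α * a * X j (θ q.2)) (u, v) :=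
      ((hnq.rpow_const (Or.inl hnv.ne')).mul_const a).mul
        (((hX j).differentiable one_ne_zero (θ v)).comp (u, v) hθq)
    exact Complex.ofRealCLM.differentiableAt.comp (u, v) hreal
  have hYd : ∀ j, DifferentiableAt ℝ
      (fun q : ℂ × ℂ => ((‖q.2‖ ^ β * b * Y j (θ q.2) : ℝ) : ℂ)) (u, v) := by
    intro j
    have hreal : DifferentiableAt ℝ (fun q : ℂ × ℂ => ‖q.2‖ ^ β * b * Y j (θ q.2)) (u, v) :=
      ((hnq.rpow_const (Or.inl hnv.ne')).mul_const b).mul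
        (((hY j).differentiable one_ne_zero (θ v)).comp (u, v) hθq)
    exact Complex.ofRealCLM.differentiableAt.comp (u, v) hreal
  have hfac : ∀ j : Fin s, DifferentiableAt ℝ
      (fun q : ℂ × ℂ => q.1 - ((‖q.2‖ ^ α * a * X j (θ q.2) : ℝ) : ℂ)
        - Complex.I * ((‖q.2‖ ^ β * b * Y j (θ q.2) : ℝ) : ℂ)) (u, v) :=
    fun j => (differentiableAt_fst.sub (hXd j)).sub ((hYd j).const_mul Complex.I)
  have hPd : DifferentiableAt ℝ P (u, v) := by
    rw [hP]
    exact (HasFDerivAt.finset_prod (u := Finset.univ)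
      (g := fun j (q : ℂ × ℂ) => q.1 - ((‖q.2‖ ^ α * a * X j (θ q.2) : ℝ) : ℂ)
        - Complex.I * ((‖q.2‖ ^ β * b * Y j (θ q.2) : ℝ) : ℂ))
      (fun j _ => (hfac j).hasFDerivAt)).differentiableAt
  have hfeq : fderiv ℝ p (u, v) = fderiv ℝ P (u, v) := hev.fderiv_eq
  -- partial derivative in `u`
  set d : ℂ := ∏ j ∈ Finset.univ.erase j0, (u - c j) with hd
  have hdne : d ≠ 0 := by
    rw [hd]
    refine Finset.prod_ne_zero_iff.mpr fun j hj => ?_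
    have hne' : c j0 ≠ c j := fun h => (Finset.mem_erase.mp hj).1 (hcinj h.symm)
    rw [huc]
    exact sub_ne_zero.mpr hne'
  have hgc : (fun w : ℂ => P (w, v)) = fun w => ∏ j, (w - c j) := by
    funext w
    rw [hP]
    simp only
    rw [hθv]
    refine Finset.prod_congr rfl fun j _ => ?_
    rw [hc]; ring
  have herased : DifferentiableAt ℂ
      (fun w : ℂ => ∏ j ∈ Finset.univ.erase j0, (w - c j)) u :=
    DifferentiableAt.fun_finsetProd fun i _ => differentiableAt_id.sub_const (c i)
  have hmulform : (fun w : ℂ => ∏ j, (w - c j))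
      = fun w => (w - c j0) * ∏ j ∈ Finset.univ.erase j0, (w - c j) := by
    funext w
    rw [← Finset.mul_prod_erase Finset.univ _ (Finset.mem_univ j0)]
  have hder : HasDerivAt (fun w : ℂ => ∏ j, (w - c j)) d u := by
    rw [hmulform]
    have h1 : HasDerivAt (fun w : ℂ => w - c j0) 1 u := (hasDerivAt_id u).sub_const (c j0)
    have h2 := herased.hasDerivAt
    have h3 := h1.mul h2
    refine h3.congr_deriv ?_
    rw [huc, sub_self, zero_mul, add_zero, one_mul, hd, huc]
  have hcomp : HasFDerivAt (fun w : ℂ => P (w, v))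
      ((fderiv ℝ P (u, v)).comp ((ContinuousLinearMap.id ℝ ℂ).prod 0)) u :=
    hPd.hasFDerivAt.comp (f := fun w : ℂ => (w, v)) u ((hasFDerivAt_id u).prodMk (hasFDerivAt_const v u))
  have hre2 : HasFDerivAt (fun w : ℂ => P (w, v))
      ((ContinuousLinearMap.smulRight (1 : ℂ →L[ℂ] ℂ) d).restrictScalars ℝ) u := by
    rw [hgc]
    exact hder.hasFDerivAt.restrictScalars ℝ
  have heqmap := hcomp.unique hre2
  intro z
  refine ⟨(z / d, 0), ?_⟩
  rw [hfeq]
  have hkey := congrArg (fun L : ℂ →L[ℝ] ℂ => L (z / d)) heqmap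
  simp only [ContinuousLinearMap.coe_comp', Function.comp_apply,
    ContinuousLinearMap.prod_apply, ContinuousLinearMap.coe_id', id_eq,
    ContinuousLinearMap.zero_apply, ContinuousLinearMap.coe_restrictScalars',
    ContinuousLinearMap.smulRight_apply, ContinuousLinearMap.one_apply,
    smul_eq_mul] at hkey
  rw [hkey]
  exact div_mul_cancel₀ z hdne
end

section
/- For every (u,v) with v ≠ 0 and p(u,v) = 0, there exists a vector w ∈ ℂ × ℂ with fderiv ℝ p (u,v) w = 0 and ⟪(u,v), w⟫ > 0. Explicitly, if j is an index with u = ‖v‖^α·a·X j t + i·‖v‖^β·b·Y j t where t = Complex.arg v and r = ‖v‖, one may take w = (α r^{α−1} a (X j t) + i β r^{β−1} b (Y j t), e^{it}), for which ⟪(u,v), w⟫ = α r^{2α−1} a² (X j t)² + β r^{2β−1} b² (Y j t)² + r > 0. Consequently the zero set of p intersects every sphere centred at the origin transversely away from the origin. -/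
open Complex


lemma argCD {v : ℂ} (hv : v ∈ Complex.slitPlane) : ContDiffAt ℝ 1 Complex.arg v := by
  have h : Complex.arg = fun z => (Complex.log z).im := by
    funext z; rw [Complex.log_im]
  rw [h]
  exact Complex.imCLM.contDiff.contDiffAt.comp v ((Complex.contDiffAt_log hv).restrict_scalars ℝ)

lemma diffAux {s : ℕ} (a b α β : ℝ) (X Y : Fin s → ℝ → ℝ)
    (hX : ∀ j, ContDiff ℝ 1 (X j)) (hY : ∀ j, ContDiff ℝ 1 (Y j))
    (θ : ℂ → ℝ) (u v : ℂ) (hv : v ≠ 0) (hθ : ContDiffAt ℝ 1 θ v) :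
    DifferentiableAt ℝ (fun z : ℂ × ℂ =>
      ∏ j, (z.1 - ((‖z.2‖ ^ α * a * X j (θ z.2) : ℝ) : ℂ)
        - Complex.I * ((‖z.2‖ ^ β * b * Y j (θ z.2) : ℝ) : ℂ))) (u, v) := by
  have hsnd : ContDiffAt ℝ 1 (fun z : ℂ × ℂ => z.2) (u, v) := contDiff_snd.contDiffAt
  have hnorm : ContDiffAt ℝ 1 (fun z : ℂ × ℂ => ‖z.2‖) (u, v) :=
    ContDiffAt.comp (u, v) (contDiffAt_norm ℝ hv) hsnd
  have hθ2 : ContDiffAt ℝ 1 (fun z : ℂ × ℂ => θ z.2) (u, v) := ContDiffAt.comp (u, v) hθ hsnd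
  have hne : ‖v‖ ≠ 0 := norm_ne_zero_iff.2 hv
  have hra : ContDiffAt ℝ 1 (fun z : ℂ × ℂ => ‖z.2‖ ^ α) (u, v) :=
    ContDiffAt.comp (u, v) (Real.contDiffAt_rpow_const_of_ne hne) hnorm
  have hrb : ContDiffAt ℝ 1 (fun z : ℂ × ℂ => ‖z.2‖ ^ β) (u, v) :=
    ContDiffAt.comp (u, v) (Real.contDiffAt_rpow_const_of_ne hne) hnorm
  apply ContDiffAt.differentiableAt _ one_ne_zero
  apply contDiffAt_prod
  intro j _
  have hXc : ContDiffAt ℝ 1 (fun z : ℂ × ℂ => X j (θ z.2)) (u, v) :=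
    ContDiffAt.comp (u, v) (hX j).contDiffAt hθ2
  have hYc : ContDiffAt ℝ 1 (fun z : ℂ × ℂ => Y j (θ z.2)) (u, v) :=
    ContDiffAt.comp (u, v) (hY j).contDiffAt hθ2
  have h1 : ContDiffAt ℝ 1 (fun z : ℂ × ℂ => ((‖z.2‖ ^ α * a * X j (θ z.2) : ℝ) : ℂ)) (u, v) :=
    ContDiffAt.comp (u, v) Complex.ofRealCLM.contDiff.contDiffAt
      (((hra.mul contDiffAt_const).mul hXc))
  have h2 : ContDiffAt ℝ 1 (fun z : ℂ × ℂ => ((‖z.2‖ ^ β * b * Y j (θ z.2) : ℝ) : ℂ)) (u, v) :=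
    ContDiffAt.comp (u, v) Complex.ofRealCLM.contDiff.contDiffAt
      (((hrb.mul contDiffAt_const).mul hYc))
  exact (contDiff_fst.contDiffAt.sub h1).sub (contDiffAt_const.mul h2)

lemma pDiff {s : ℕ} (a b α β : ℝ) (X Y : Fin s → ℝ → ℝ)
    (hX : ∀ j, ContDiff ℝ 1 (X j)) (hY : ∀ j, ContDiff ℝ 1 (Y j))
    (σ : Equiv.Perm (Fin s))
    (hσX : ∀ j t, X j (t + 2 * Real.pi) = X (σ j) t)
    (hσY : ∀ j t, Y j (t + 2 * Real.pi) = Y (σ j) t)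
    (p : ℂ × ℂ → ℂ)
    (hp : ∀ u v : ℂ, v ≠ 0 →
      p (u, v) = ∏ j, (u - ((‖v‖ ^ α * a * X j (Complex.arg v) : ℝ) : ℂ)
        - Complex.I * ((‖v‖ ^ β * b * Y j (Complex.arg v) : ℝ) : ℂ)))
    (u v : ℂ) (hv : v ≠ 0) : DifferentiableAt ℝ p (u, v) := by
  by_cases hsl : v ∈ Complex.slitPlane
  · have hF := diffAux a b α β X Y hX hY Complex.arg u v hv (argCD hsl)
    apply hF.congr_of_eventuallyEq
    have hopen : IsOpen {z : ℂ × ℂ | z.2 ≠ 0} :=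
      isOpen_compl_iff.2 (isClosed_eq continuous_snd continuous_const) |>.mono le_rfl
    filter_upwards [hopen.mem_nhds (by simpa using hv)] with z hz
    rw [show z = (z.1, z.2) from rfl, hp z.1 z.2 hz]
  · -- v is a negative real
    have hre : v.re < 0 := by
      have h := by simpa [Complex.mem_slitPlane_iff] using hsl
      rcases lt_or_eq_of_le h.1 with hlt | heq
      · exact hlt
      · exact absurd (Complex.ext (by simp [← heq]) (by simp [h.2])) hv
    set θ : ℂ → ℝ := fun w => Complex.arg (-w) + Real.pi with hθdef
    have hθCD : ContDiffAt ℝ 1 θ v := by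
      have hmem : -v ∈ Complex.slitPlane := by
        rw [Complex.mem_slitPlane_iff]; left; simpa using hre
      exact ((argCD hmem).comp v contDiff_neg.contDiffAt).add contDiffAt_const
    have hF := diffAux a b α β X Y hX hY θ u v hv hθCD
    apply hF.congr_of_eventuallyEq
    have hopen : IsOpen {z : ℂ × ℂ | z.2.re < 0} :=
      isOpen_lt (Complex.continuous_re.comp continuous_snd) continuous_const
    filter_upwards [hopen.mem_nhds hre] with z hz
    have hz0 : z.2 ≠ 0 := by
      intro h; rw [h] at hz; simp at hz
    rw [show z = (z.1, z.2) from rfl, hp z.1 z.2 hz0]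
    rcases lt_trichotomy z.2.im 0 with him | him | him
    · have hθeq : θ z.2 = Complex.arg z.2 + 2 * Real.pi := by
        rw [hθdef]; simp only
        rw [Complex.arg_neg_eq_arg_add_pi_of_im_neg him]; ring
      have : ∀ j, (z.1 - ((‖z.2‖ ^ α * a * X j (θ z.2) : ℝ) : ℂ)
          - Complex.I * ((‖z.2‖ ^ β * b * Y j (θ z.2) : ℝ) : ℂ))
          = (z.1 - ((‖z.2‖ ^ α * a * X (σ j) (Complex.arg z.2) : ℝ) : ℂ)
          - Complex.I * ((‖z.2‖ ^ β * b * Y (σ j) (Complex.arg z.2) : ℝ) : ℂ)) := by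
        intro j; rw [hθeq, hσX j, hσY j]
      rw [Finset.prod_congr rfl (fun j _ => this j)]
      exact (Equiv.prod_comp σ (fun j => z.1 - ((‖z.2‖ ^ α * a * X j (Complex.arg z.2) : ℝ) : ℂ)
          - Complex.I * ((‖z.2‖ ^ β * b * Y j (Complex.arg z.2) : ℝ) : ℂ))).symm
    · have hθeq : θ z.2 = Complex.arg z.2 := by
        rw [hθdef]; simp only
        rw [Complex.arg_eq_zero_iff.2 ⟨by simpa using hz.le, by simpa using him⟩,
          Complex.arg_eq_pi_iff.2 ⟨hz, him⟩, zero_add]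
      rw [hθeq]
    · have hθeq : θ z.2 = Complex.arg z.2 := by
        rw [hθdef]; simp only
        rw [Complex.arg_neg_eq_arg_sub_pi_of_im_pos him]; ring
      rw [hθeq]

lemma kernelAux {s : ℕ} (a b α β : ℝ) (hα : 1 < α) (hβ : 1 < β)
    (X Y : Fin s → ℝ → ℝ) (p : ℂ × ℂ → ℂ)
    (hp : ∀ u v : ℂ, v ≠ 0 →
      p (u, v) = ∏ j, (u - ((‖v‖ ^ α * a * X j (Complex.arg v) : ℝ) : ℂ)
        - Complex.I * ((‖v‖ ^ β * b * Y j (Complex.arg v) : ℝ) : ℂ)))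
    (u v : ℂ) (hv : v ≠ 0) (hdp : DifferentiableAt ℝ p (u, v)) (j : Fin s)
    (hu : u = ((‖v‖ ^ α * a * X j (Complex.arg v) : ℝ) : ℂ)
        + Complex.I * ((‖v‖ ^ β * b * Y j (Complex.arg v) : ℝ) : ℂ)) :
    fderiv ℝ p (u, v)
        (((α * ‖v‖ ^ (α - 1) * a * X j (Complex.arg v) : ℝ) : ℂ)
          + Complex.I * ((β * ‖v‖ ^ (β - 1) * b * Y j (Complex.arg v) : ℝ) : ℂ),
         Complex.exp (Complex.I * (Complex.arg v : ℂ))) = 0 := by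
  set r : ℝ := ‖v‖ with hrdef
  set t : ℝ := Complex.arg v with htdef
  have hr : 0 < r := norm_pos_iff.2 hv
  set w : ℂ × ℂ := (((α * r ^ (α - 1) * a * X j t : ℝ) : ℂ)
      + Complex.I * ((β * r ^ (β - 1) * b * Y j t : ℝ) : ℂ),
      Complex.exp (Complex.I * (t : ℂ))) with hwdef
  set c : ℝ → ℂ × ℂ := fun τ =>
    ((((r + τ) ^ α * a * X j t : ℝ) : ℂ) + Complex.I * (((r + τ) ^ β * b * Y j t : ℝ) : ℂ),
      ((r + τ : ℝ) : ℂ) * Complex.exp (Complex.I * (t : ℂ))) with hcdef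
  -- c 0 = (u, v)
  have hveq : v = (r : ℂ) * Complex.exp (Complex.I * (t : ℂ)) := by
    rw [mul_comm Complex.I]
    exact (Complex.norm_mul_exp_arg_mul_I v).symm
  have hc0 : c 0 = (u, v) := by
    rw [hcdef]; simp only [add_zero]
    exact Prod.ext (by rw [hu]) (by rw [hveq])
  -- derivative of c
  have hda : HasDerivAt (fun τ : ℝ => (r + τ) ^ α) (α * r ^ (α - 1)) 0 := by
    have h1 : HasDerivAt (fun τ : ℝ => r + τ) 1 0 := (hasDerivAt_id 0).const_add r
    have h2 : HasDerivAt (fun x : ℝ => x ^ α) (α * (r + 0) ^ (α - 1)) (r + 0) :=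
      Real.hasDerivAt_rpow_const (Or.inl (by positivity))
    have := h2.comp 0 h1
    simpa [Function.comp_def] using this
  have hdb : HasDerivAt (fun τ : ℝ => (r + τ) ^ β) (β * r ^ (β - 1)) 0 := by
    have h1 : HasDerivAt (fun τ : ℝ => r + τ) 1 0 := (hasDerivAt_id 0).const_add r
    have h2 : HasDerivAt (fun x : ℝ => x ^ β) (β * (r + 0) ^ (β - 1)) (r + 0) :=
      Real.hasDerivAt_rpow_const (Or.inl (by positivity))
    have := h2.comp 0 h1
    simpa [Function.comp_def] using this
  have hd1 : HasDerivAt (fun τ : ℝ =>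
      ((((r + τ) ^ α * a * X j t : ℝ) : ℂ) + Complex.I * (((r + τ) ^ β * b * Y j t : ℝ) : ℂ)))
      (((α * r ^ (α - 1) * a * X j t : ℝ) : ℂ)
        + Complex.I * ((β * r ^ (β - 1) * b * Y j t : ℝ) : ℂ)) 0 := by
    have ha' : HasDerivAt (fun τ : ℝ => (r + τ) ^ α * a * X j t)
        (α * r ^ (α - 1) * a * X j t) 0 := by
      have := hda.mul_const (a * X j t)
      simpa [mul_assoc] using this
    have hb' : HasDerivAt (fun τ : ℝ => (r + τ) ^ β * b * Y j t)
        (β * r ^ (β - 1) * b * Y j t) 0 := by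
      have := hdb.mul_const (b * Y j t)
      simpa [mul_assoc] using this
    exact ha'.ofReal_comp.add ((hb'.ofReal_comp).const_mul Complex.I)
  have hd2 : HasDerivAt (fun τ : ℝ => ((r + τ : ℝ) : ℂ) * Complex.exp (Complex.I * (t : ℂ)))
      (Complex.exp (Complex.I * (t : ℂ))) 0 := by
    have h1 : HasDerivAt (fun τ : ℝ => ((r + τ : ℝ) : ℂ)) 1 0 := by
      have : HasDerivAt (fun τ : ℝ => r + τ) 1 0 := (hasDerivAt_id 0).const_add r
      simpa using this.ofReal_comp
    simpa using h1.mul_const (Complex.exp (Complex.I * (t : ℂ)))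
  have hdc : HasDerivAt c w 0 := hd1.prodMk hd2
  -- p ∘ c is eventually 0
  have hz : ∀ᶠ τ in nhds (0 : ℝ), p (c τ) = 0 := by
    filter_upwards [Ioo_mem_nhds (by linarith : -r < (0:ℝ)) hr] with τ hτ
    have hrt : 0 < r + τ := by rcases hτ with ⟨h1, _⟩; linarith
    have hfrac : 0 < (r + τ) / r := div_pos hrt hr
    have hc2 : (c τ).2 = (((r + τ) / r : ℝ) : ℂ) * v := by
      rw [hcdef]; simp only
      rw [hveq]; push_cast
      have hrne : (r:ℂ) ≠ 0 := by exact_mod_cast hr.ne'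
      field_simp
    have hc2ne : (c τ).2 ≠ 0 := by
      rw [hc2]
      exact mul_ne_zero (by exact_mod_cast (ne_of_gt hfrac)) hv
    have harg : Complex.arg ((c τ).2) = t := by
      rw [hc2, htdef]; exact Complex.arg_real_mul v hfrac
    have hnorm : ‖(c τ).2‖ = r + τ := by
      rw [hc2, norm_mul, Complex.norm_real, Real.norm_eq_abs, abs_of_pos hfrac, ← hrdef]
      field_simp
    have := hp (c τ).1 (c τ).2 hc2ne
    rw [show ((c τ).1, (c τ).2) = c τ from rfl] at this
    rw [this, harg, hnorm]
    apply Finset.prod_eq_zero (Finset.mem_univ j)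
    rw [hcdef]; simp only
    ring
  -- conclude
  have h1 : HasDerivAt (fun τ => p (c τ)) (fderiv ℝ p (u, v) w) 0 := by
    have hdc' : HasDerivAt c w 0 := hdc
    rw [← hc0] at hdp
    have := hdp.hasFDerivAt.comp_hasDerivAt 0 hdc'
    rw [hc0] at this
    exact this
  have h2 : HasDerivAt (fun τ => p (c τ)) 0 0 :=
    (hasDerivAt_const (0 : ℝ) (0 : ℂ)).congr_of_eventuallyEq hz
  exact h1.unique h2


/-- The real inner product on `ℂ × ℂ ≅ ℝ⁴`. -/
noncomputable def realInner4 (x y : ℂ × ℂ) : ℝ :=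
  (x.1 * (starRingEnd ℂ) y.1).re + (x.2 * (starRingEnd ℂ) y.2).re

/-- transversality of the zero set of `p = p_{a,b,k}` to the
spheres centred at the origin: at every zero with `v ≠ 0` there is a vector
`w` in the kernel of the real derivative of `p` with `⟪(u,v), w⟫ > 0`;
explicitly, if `u` is the `j`-th root, one may take
`w = (α r^{α−1} a X_j(t) + i β r^{β−1} b Y_j(t), e^{it})`, whose inner product
with `(u,v)` equals `α r^{2α−1} a² X_j(t)² + β r^{2β−1} b² Y_j(t)² + r > 0`. -/
theorem stmt_2 (s : ℕ) (hs : 1 ≤ s) (a b : ℝ) (ha : 0 < a) (hb : 0 < b)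
    (α β : ℝ) (hα : 1 < α) (hβ : 1 < β)
    (X Y : Fin s → ℝ → ℝ)
    (hX : ∀ j, ContDiff ℝ 1 (X j)) (hY : ∀ j, ContDiff ℝ 1 (Y j))
    (σ : Equiv.Perm (Fin s))
    (hσX : ∀ j t, X j (t + 2 * Real.pi) = X (σ j) t)
    (hσY : ∀ j t, Y j (t + 2 * Real.pi) = Y (σ j) t)
    (p : ℂ × ℂ → ℂ)
    (hp0 : ∀ u : ℂ, p (u, 0) = u ^ s)
    (hp : ∀ u v : ℂ, v ≠ 0 →
      p (u, v) = ∏ j, (u - ((‖v‖ ^ α * a * X j (Complex.arg v) : ℝ) : ℂ)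
        - Complex.I * ((‖v‖ ^ β * b * Y j (Complex.arg v) : ℝ) : ℂ))) :
    ∀ u v : ℂ, v ≠ 0 → p (u, v) = 0 →
      (∃ w : ℂ × ℂ, fderiv ℝ p (u, v) w = 0 ∧ 0 < realInner4 (u, v) w) ∧
      ∀ j : Fin s,
        u = ((‖v‖ ^ α * a * X j (Complex.arg v) : ℝ) : ℂ)
            + Complex.I * ((‖v‖ ^ β * b * Y j (Complex.arg v) : ℝ) : ℂ) →
        fderiv ℝ p (u, v)
            (((α * ‖v‖ ^ (α - 1) * a * X j (Complex.arg v) : ℝ) : ℂ)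
              + Complex.I * ((β * ‖v‖ ^ (β - 1) * b * Y j (Complex.arg v) : ℝ) : ℂ),
             Complex.exp (Complex.I * (Complex.arg v : ℂ))) = 0 ∧
        realInner4 (u, v)
            (((α * ‖v‖ ^ (α - 1) * a * X j (Complex.arg v) : ℝ) : ℂ)
              + Complex.I * ((β * ‖v‖ ^ (β - 1) * b * Y j (Complex.arg v) : ℝ) : ℂ),
             Complex.exp (Complex.I * (Complex.arg v : ℂ)))
          = α * ‖v‖ ^ (2 * α - 1) * a ^ 2 * X j (Complex.arg v) ^ 2
            + β * ‖v‖ ^ (2 * β - 1) * b ^ 2 * Y j (Complex.arg v) ^ 2 + ‖v‖ ∧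
        0 < α * ‖v‖ ^ (2 * α - 1) * a ^ 2 * X j (Complex.arg v) ^ 2
            + β * ‖v‖ ^ (2 * β - 1) * b ^ 2 * Y j (Complex.arg v) ^ 2 + ‖v‖ := by
  intro u v hv hpz
  have hr : 0 < ‖v‖ := norm_pos_iff.2 hv
  have hdp : DifferentiableAt ℝ p (u, v) := pDiff a b α β X Y hX hY σ hσX hσY p hp u v hv
  have hpos : ∀ j : Fin s,
      0 < α * ‖v‖ ^ (2 * α - 1) * a ^ 2 * X j (Complex.arg v) ^ 2
        + β * ‖v‖ ^ (2 * β - 1) * b ^ 2 * Y j (Complex.arg v) ^ 2 + ‖v‖ := by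
    intro j
    have hα0 : (0:ℝ) ≤ α := by linarith
    have hβ0 : (0:ℝ) ≤ β := by linarith
    have t1 : 0 ≤ α * ‖v‖ ^ (2 * α - 1) * a ^ 2 * X j (Complex.arg v) ^ 2 :=
      mul_nonneg (mul_nonneg (mul_nonneg hα0 (Real.rpow_nonneg (norm_nonneg v) _))
        (sq_nonneg a)) (sq_nonneg _)
    have t2 : 0 ≤ β * ‖v‖ ^ (2 * β - 1) * b ^ 2 * Y j (Complex.arg v) ^ 2 :=
      mul_nonneg (mul_nonneg (mul_nonneg hβ0 (Real.rpow_nonneg (norm_nonneg v) _))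
        (sq_nonneg b)) (sq_nonneg _)
    linarith
  have hinner : ∀ j : Fin s,
      u = ((‖v‖ ^ α * a * X j (Complex.arg v) : ℝ) : ℂ)
          + Complex.I * ((‖v‖ ^ β * b * Y j (Complex.arg v) : ℝ) : ℂ) →
      realInner4 (u, v)
          (((α * ‖v‖ ^ (α - 1) * a * X j (Complex.arg v) : ℝ) : ℂ)
            + Complex.I * ((β * ‖v‖ ^ (β - 1) * b * Y j (Complex.arg v) : ℝ) : ℂ),
           Complex.exp (Complex.I * (Complex.arg v : ℂ)))
        = α * ‖v‖ ^ (2 * α - 1) * a ^ 2 * X j (Complex.arg v) ^ 2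
          + β * ‖v‖ ^ (2 * β - 1) * b ^ 2 * Y j (Complex.arg v) ^ 2 + ‖v‖ := by
    intro j hu
    set r : ℝ := ‖v‖ with hrdef
    set t : ℝ := Complex.arg v with htdef
    have hveq : v = (r : ℂ) * Complex.exp (Complex.I * (t : ℂ)) := by
      rw [mul_comm Complex.I]
      exact (Complex.norm_mul_exp_arg_mul_I v).symm
    have h2 : (v * (starRingEnd ℂ) (Complex.exp (Complex.I * (t : ℂ)))).re = r := by
      rw [hveq, ← Complex.exp_conj]
      have : (starRingEnd ℂ) (Complex.I * (t : ℂ)) = -(Complex.I * (t : ℂ)) := by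
        simp [map_mul, Complex.conj_I, Complex.conj_ofReal]
      rw [this, mul_assoc, ← Complex.exp_add, add_neg_cancel, Complex.exp_zero, mul_one]
      simp
    have h1 : ((u * (starRingEnd ℂ) (((α * r ^ (α - 1) * a * X j t : ℝ) : ℂ)
        + Complex.I * ((β * r ^ (β - 1) * b * Y j t : ℝ) : ℂ)))).re
        = (r ^ α * a * X j t) * (α * r ^ (α - 1) * a * X j t)
          + (r ^ β * b * Y j t) * (β * r ^ (β - 1) * b * Y j t) := by
      rw [hu]
      simp [Complex.mul_re]
    have e1 : r ^ α * r ^ (α - 1) = r ^ (2 * α - 1) := by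
      rw [← Real.rpow_add hr]; ring_nf
    have e2 : r ^ β * r ^ (β - 1) = r ^ (2 * β - 1) := by
      rw [← Real.rpow_add hr]; ring_nf
    unfold realInner4
    rw [show ((u, v) : ℂ × ℂ).1 = u from rfl, show ((u, v) : ℂ × ℂ).2 = v from rfl]
    rw [h1, h2]
    linear_combination (α * a ^ 2 * X j t ^ 2) * e1 + (β * b ^ 2 * Y j t ^ 2) * e2
  have hmain : ∀ j : Fin s,
      u = ((‖v‖ ^ α * a * X j (Complex.arg v) : ℝ) : ℂ)
          + Complex.I * ((‖v‖ ^ β * b * Y j (Complex.arg v) : ℝ) : ℂ) →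
      fderiv ℝ p (u, v)
          (((α * ‖v‖ ^ (α - 1) * a * X j (Complex.arg v) : ℝ) : ℂ)
            + Complex.I * ((β * ‖v‖ ^ (β - 1) * b * Y j (Complex.arg v) : ℝ) : ℂ),
           Complex.exp (Complex.I * (Complex.arg v : ℂ))) = 0 ∧
      realInner4 (u, v)
          (((α * ‖v‖ ^ (α - 1) * a * X j (Complex.arg v) : ℝ) : ℂ)
            + Complex.I * ((β * ‖v‖ ^ (β - 1) * b * Y j (Complex.arg v) : ℝ) : ℂ),
           Complex.exp (Complex.I * (Complex.arg v : ℂ)))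
        = α * ‖v‖ ^ (2 * α - 1) * a ^ 2 * X j (Complex.arg v) ^ 2
          + β * ‖v‖ ^ (2 * β - 1) * b ^ 2 * Y j (Complex.arg v) ^ 2 + ‖v‖ ∧
      0 < α * ‖v‖ ^ (2 * α - 1) * a ^ 2 * X j (Complex.arg v) ^ 2
          + β * ‖v‖ ^ (2 * β - 1) * b ^ 2 * Y j (Complex.arg v) ^ 2 + ‖v‖ := by
    intro j hu
    exact ⟨kernelAux a b α β hα hβ X Y p hp u v hv hdp j hu, hinner j hu, hpos j⟩
  refine ⟨?_, hmain⟩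
  have hprod := hp u v hv
  rw [hpz] at hprod
  obtain ⟨j, -, hj⟩ := Finset.prod_eq_zero_iff.1 hprod.symm
  have hu : u = ((‖v‖ ^ α * a * X j (Complex.arg v) : ℝ) : ℂ)
      + Complex.I * ((‖v‖ ^ β * b * Y j (Complex.arg v) : ℝ) : ℂ) := by
    linear_combination hj
  obtain ⟨h1, h2, h3⟩ := hmain j hu
  exact ⟨_, h1, by rw [h2]; exact h3⟩
end

section
/- Let m be a natural number and s, A, M integers such that 2^m divides s but 2^{m+1} does not divide s, 2^m divides A, and s divides A + 2^{m+1}·M. Then the integer A/2^m − (A + 2^{m+1}·M)/s is even (the two integer divisions being exact by the divisibility hypotheses; note s ≠ 0 follows from ¬(2^{m+1} ∣ s)). -/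
/-- the key arithmetic claim of Lemma `odd`: if `2^m` is the
highest power of two dividing `s`, `2^m ∣ A` and `s ∣ A + 2^{m+1}·M`, then the
integer `A/2^m − (A + 2^{m+1}·M)/s` is even. -/
theorem stmt_4 (m : ℕ) (s A M : ℤ)
    (h1 : (2 : ℤ) ^ m ∣ s) (h2 : ¬ (2 : ℤ) ^ (m + 1) ∣ s)
    (h3 : (2 : ℤ) ^ m ∣ A) (h4 : s ∣ A + 2 ^ (m + 1) * M) :
    Even (A / 2 ^ m - (A + 2 ^ (m + 1) * M) / s) := by
  obtain ⟨t, ht⟩ := h1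
  obtain ⟨a, ha⟩ := h3
  obtain ⟨q, hq⟩ := h4
  have h2m : (2:ℤ)^m ≠ 0 := by positivity
  have hs : s ≠ 0 := by rintro rfl; exact h2 ⟨0, by ring⟩
  have hdiv1 : A / 2^m = a := by rw [ha, Int.mul_ediv_cancel_left _ h2m]
  have hdiv2 : (A + 2^(m+1)*M) / s = q := by rw [hq, Int.mul_ediv_cancel_left _ hs]
  have ht_odd : Odd t := by
    rcases Int.even_or_odd t with he | ho
    · exfalso
      obtain ⟨u, hu⟩ := he
      exact h2 ⟨u, by rw [ht, hu]; ring⟩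
    · exact ho
  obtain ⟨k, hk⟩ := ht_odd
  have key : a + 2*M = t*q := by
    have h : (2:ℤ)^m * (a + 2*M) = 2^m * (t*q) := by
      have := hq
      rw [ha, ht] at this
      calc (2:ℤ)^m * (a + 2*M) = 2^m * a + 2^(m+1)*M := by ring
        _ = 2^m * t * q := this
        _ = 2^m * (t*q) := by ring
    exact mul_left_cancel₀ h2m h
  rw [hdiv1, hdiv2]
  exact ⟨k*q - M, by rw [hk] at key; linarith⟩
end

section
/- For every u₀ ∈ ℂ, the map p has a real Fréchet derivative at the point (u₀, 0) equal to the ℝ-linear map (h,w) ↦ s·u₀^{s−1}·h. In particular, if s ≥ 2 then fderiv ℝ p (0,0) = 0, i.e. the origin is a singular point of p viewed as a map ℝ⁴ → ℝ². -/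
open Complex

lemma aux_prod {ι : Type*} (t : Finset ι) (u : ℂ) (w : ι → ℂ) (M : ℝ) (hM : 0 ≤ M)
    (hw : ∀ j ∈ t, ‖w j‖ ≤ M) :
    ‖∏ j ∈ t, (u - w j) - u ^ t.card‖ ≤ t.card * (‖u‖ + M) ^ (t.card - 1) * M := by
  classical
  induction t using Finset.induction_on with
  | empty => simp
  | @insert a t' ha ih =>
    have hwa : ‖w a‖ ≤ M := hw a (Finset.mem_insert_self a t')
    have hw' : ∀ j ∈ t', ‖w j‖ ≤ M := fun j hj => hw j (Finset.mem_insert_of_mem hj)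
    have IH := ih hw'
    set n := t'.card with hn
    rw [Finset.prod_insert ha, Finset.card_insert_of_notMem ha]
    have key : (u - w a) * ∏ j ∈ t', (u - w j) - u ^ (n + 1)
        = (u - w a) * (∏ j ∈ t', (u - w j) - u ^ n) - w a * u ^ n := by
      ring
    rw [key]
    have h1 : ‖(u - w a) * (∏ j ∈ t', (u - w j) - u ^ n) - w a * u ^ n‖
        ≤ ‖u - w a‖ * ‖∏ j ∈ t', (u - w j) - u ^ n‖ + ‖w a‖ * ‖u ^ n‖ := by
      calc _ ≤ ‖(u - w a) * (∏ j ∈ t', (u - w j) - u ^ n)‖ + ‖w a * u ^ n‖ :=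
              norm_sub_le _ _
        _ = _ := by rw [norm_mul, norm_mul]
    have hua : ‖u - w a‖ ≤ ‖u‖ + M := (norm_sub_le _ _).trans (by linarith)
    have hun : ‖u ^ n‖ ≤ (‖u‖ + M) ^ n := by
      rw [norm_pow]; exact pow_le_pow_left₀ (norm_nonneg _) (by linarith) n
    have h2 : ‖u - w a‖ * ‖∏ j ∈ t', (u - w j) - u ^ n‖
        ≤ (‖u‖ + M) * (n * (‖u‖ + M) ^ (n - 1) * M) := by
      apply mul_le_mul hua IH (norm_nonneg _)
      linarith [norm_nonneg u]
    have h3 : (‖u‖ + M) * ((n : ℝ) * (‖u‖ + M) ^ (n - 1) * M) ≤ n * (‖u‖ + M) ^ n * M := by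
      rcases Nat.eq_zero_or_pos n with h | h
      · simp [h]
      · have : (‖u‖ + M) * (‖u‖ + M) ^ (n - 1) = (‖u‖ + M) ^ n := by
          rw [← pow_succ']
          congr 1
          omega
        exact le_of_eq (by rw [← this]; ring)
    have h4 : ‖w a‖ * ‖u ^ n‖ ≤ M * (‖u‖ + M) ^ n := by
      apply mul_le_mul hwa hun (norm_nonneg _) hM
    have : (n + 1 : ℕ) - 1 = n := by omega
    rw [this]
    push_cast
    nlinarith [h1, h2, h3, h4]

/-- at every point `(u₀, 0)` the map `p` has real Fréchet
derivative `(h, w) ↦ s·u₀^{s−1}·h`; in particular, for `s ≥ 2` the origin is a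
singular point of `p : ℝ⁴ → ℝ²`. -/
theorem stmt_6 (s : ℕ) (hs : 1 ≤ s) (c : ℝ) (hc : 2 ≤ c)
    (γ : Fin s → ℝ → ℂ) (hγ : ∀ j, Continuous (γ j))
    (σ : Equiv.Perm (Fin s))
    (hσ : ∀ j t, γ j (t + 2 * Real.pi) = γ (σ j) t)
    (p : ℂ × ℂ → ℂ)
    (hp0 : ∀ u : ℂ, p (u, 0) = u ^ s)
    (hp : ∀ u v : ℂ, v ≠ 0 →
      p (u, v) = ∏ j, (u - (‖v‖ ^ c : ℝ) • γ j (Complex.arg v))) :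
    (∀ u₀ : ℂ,
      HasFDerivAt p (((s : ℂ) * u₀ ^ (s - 1)) • ContinuousLinearMap.fst ℝ ℂ ℂ) (u₀, 0)) ∧
    (2 ≤ s → fderiv ℝ p (0, 0) = 0) := by
  -- a uniform bound on the strands over [-π, π]
  obtain ⟨B, hB0, hB⟩ : ∃ B : ℝ, 0 ≤ B ∧
      ∀ j θ, θ ∈ Set.Icc (-Real.pi) Real.pi → ‖γ j θ‖ ≤ B := by
    have h := fun j => (isCompact_Icc (a := -Real.pi) (b := Real.pi)).exists_bound_of_continuousOn
      (hγ j).continuousOn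
    choose Bj hBj using h
    refine ⟨∑ j, max (Bj j) 0, Finset.sum_nonneg fun j _ => le_max_right _ _, fun j θ hθ => ?_⟩
    calc ‖γ j θ‖ ≤ Bj j := hBj j θ hθ
      _ ≤ max (Bj j) 0 := le_max_left _ _
      _ ≤ ∑ j, max (Bj j) 0 :=
          Finset.single_le_sum (f := fun i => max (Bj i) 0)
            (fun i _ => le_max_right _ _) (Finset.mem_univ j)
  have main : ∀ u₀ : ℂ,
      HasFDerivAt p (((s : ℂ) * u₀ ^ (s - 1)) • ContinuousLinearMap.fst ℝ ℂ ℂ) (u₀, 0) := by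
    intro u₀
    -- the reference map
    have hf : HasFDerivAt (fun x : ℂ × ℂ => x.1 ^ s)
        (((s : ℂ) * u₀ ^ (s - 1)) • ContinuousLinearMap.fst ℝ ℂ ℂ) (u₀, 0) := by
      have h1 : HasFDerivAt (fun u : ℂ => u ^ s)
          ((ContinuousLinearMap.id ℂ ℂ).smulRight ((s : ℂ) * u₀ ^ (s - 1))) u₀ :=
        (hasDerivAt_pow s u₀).hasFDerivAt
      have h2 := (h1.restrictScalars ℝ).comp (u₀, (0:ℂ))
        (hasFDerivAt_fst (𝕜 := ℝ) (p := ((u₀ : ℂ), (0:ℂ))))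
      exact h2.congr_fderiv (ContinuousLinearMap.ext fun x => by simp [mul_comm])
    -- the error term is little-o
    have hq : (fun x : ℂ × ℂ => p x - x.1 ^ s)
        =o[nhds (u₀, (0:ℂ))] fun x => x - (u₀, (0:ℂ)) := by
      rw [Asymptotics.isLittleO_iff]
      intro ε hε
      have hKpos : 0 < (s : ℝ) * (‖u₀‖ + 1 + B) ^ (s - 1) * B + 1 := by positivity
      set K : ℝ := (s : ℝ) * (‖u₀‖ + 1 + B) ^ (s - 1) * B + 1 with hK
      set δ : ℝ := min 1 (ε / K) with hδ
      have hδpos : 0 < δ := lt_min one_pos (div_pos hε hKpos)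
      filter_upwards [Metric.ball_mem_nhds (u₀, (0:ℂ)) hδpos] with x hx
      obtain ⟨u, v⟩ := x
      have hxd : ‖(u, v) - (u₀, (0:ℂ))‖ < δ := by
        rwa [Metric.mem_ball, dist_eq_norm] at hx
      have hv : ‖v‖ ≤ ‖(u, v) - (u₀, (0:ℂ))‖ := by
        simpa using norm_snd_le ((u, v) - (u₀, (0:ℂ)))
      have hv1 : ‖v‖ < δ := lt_of_le_of_lt hv hxd
      have hu : ‖u - u₀‖ ≤ ‖(u, v) - (u₀, (0:ℂ))‖ := by
        simpa using norm_fst_le ((u, v) - (u₀, (0:ℂ)))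
      have hu1 : ‖u‖ ≤ ‖u₀‖ + 1 := by
        have := norm_sub_norm_le u u₀
        have hδ1 : δ ≤ 1 := min_le_left _ _
        nlinarith [hu.trans_lt hxd]
      by_cases hv0 : v = 0
      · subst hv0
        simp only [hp0]
        simp only [sub_self, norm_zero]
        positivity
      -- v ≠ 0
      have harg : Complex.arg v ∈ Set.Icc (-Real.pi) Real.pi :=
        ⟨le_of_lt (Complex.neg_pi_lt_arg v), Complex.arg_le_pi v⟩
      have hvpos : 0 < ‖v‖ := norm_pos_iff.mpr hv0
      have hrc : ‖v‖ ^ c ≤ ‖v‖ * ‖v‖ := by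
        calc ‖v‖ ^ c ≤ ‖v‖ ^ (2:ℝ) :=
              Real.rpow_le_rpow_of_exponent_ge hvpos
                (le_of_lt (hv1.trans_le (min_le_left _ _))) hc
          _ = ‖v‖ * ‖v‖ := by rw [Real.rpow_two, pow_two]
      set M : ℝ := ‖v‖ ^ c * B with hM
      have hMnn : 0 ≤ M := mul_nonneg (Real.rpow_nonneg (norm_nonneg v) c) hB0
      have hwb : ∀ j ∈ (Finset.univ : Finset (Fin s)),
          ‖(‖v‖ ^ c : ℝ) • γ j (Complex.arg v)‖ ≤ M := by
        intro j _
        rw [norm_smul, Real.norm_eq_abs, _root_.abs_of_nonneg (Real.rpow_nonneg (norm_nonneg v) c)]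
        exact mul_le_mul_of_nonneg_left (hB j _ harg) (Real.rpow_nonneg (norm_nonneg v) c)
      have hbound := aux_prod Finset.univ u (fun j => (‖v‖ ^ c : ℝ) • γ j (Complex.arg v))
        M hMnn hwb
      rw [hp u v hv0]
      simp only [Finset.card_univ, Fintype.card_fin] at hbound
      -- chain of estimates
      have hM1 : M ≤ B * (‖v‖ * ‖v‖) := by
        calc M = ‖v‖ ^ c * B := rfl
          _ ≤ (‖v‖ * ‖v‖) * B := mul_le_mul_of_nonneg_right hrc hB0
          _ = B * (‖v‖ * ‖v‖) := by ring
      have hMB : M ≤ B := by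
        have hvle : ‖v‖ ≤ 1 := le_of_lt (hv1.trans_le (min_le_left _ _))
        have hvv : ‖v‖ * ‖v‖ ≤ 1 := by nlinarith [hvpos.le]
        nlinarith [hM1, hB0]
      have hpow : (‖u‖ + M) ^ (s - 1) ≤ (‖u₀‖ + 1 + B) ^ (s - 1) :=
        pow_le_pow_left₀ (by linarith [norm_nonneg u]) (by linarith) _
      have hchain : (s : ℝ) * (‖u‖ + M) ^ (s - 1) * M ≤ ε * ‖(u, v) - (u₀, (0:ℂ))‖ := by
        have hvn : 0 ≤ ‖v‖ := norm_nonneg v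
        have step1 : (s : ℝ) * (‖u‖ + M) ^ (s - 1) * M
            ≤ (s : ℝ) * (‖u₀‖ + 1 + B) ^ (s - 1) * (B * (‖v‖ * ‖v‖)) := by
          apply mul_le_mul
          · exact mul_le_mul_of_nonneg_left hpow (Nat.cast_nonneg s)
          · exact hM1
          · exact hMnn
          · positivity
        have step2 : (s : ℝ) * (‖u₀‖ + 1 + B) ^ (s - 1) * (B * (‖v‖ * ‖v‖))
            ≤ K * ‖v‖ * ‖v‖ := by
          have hK' : (s : ℝ) * (‖u₀‖ + 1 + B) ^ (s - 1) * B ≤ K := by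
            rw [hK]; linarith
          nlinarith [norm_nonneg v]
        have step3 : K * ‖v‖ * ‖v‖ ≤ ε * ‖(u, v) - (u₀, (0:ℂ))‖ := by
          have h1 : K * ‖v‖ ≤ ε := by
            have : ‖v‖ ≤ ε / K := le_of_lt (hv1.trans_le (min_le_right _ _))
            calc K * ‖v‖ ≤ K * (ε / K) := mul_le_mul_of_nonneg_left this hKpos.le
              _ = ε := by field_simp
          calc K * ‖v‖ * ‖v‖ ≤ ε * ‖v‖ :=
                mul_le_mul_of_nonneg_right h1 (norm_nonneg v)
            _ ≤ ε * ‖(u, v) - (u₀, (0:ℂ))‖ := mul_le_mul_of_nonneg_left hv hε.le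
        linarith
      calc ‖∏ j, (u - (‖v‖ ^ c : ℝ) • γ j (Complex.arg v)) - u ^ s‖
          ≤ (s : ℝ) * (‖u‖ + M) ^ (s - 1) * M := hbound
        _ ≤ ε * ‖(u, v) - (u₀, (0:ℂ))‖ := hchain
    -- assemble
    rw [hasFDerivAt_iff_isLittleO_nhds_zero] at hf ⊢
    have htr : Filter.Tendsto (fun h : ℂ × ℂ => (u₀, (0:ℂ)) + h) (nhds 0)
        (nhds (u₀, (0:ℂ))) := by
      simpa using (continuous_add_left (u₀, (0:ℂ))).tendsto (0 : ℂ × ℂ)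
    have hq2 := hq.comp_tendsto htr
    have hq3 : (fun h : ℂ × ℂ => p ((u₀, (0:ℂ)) + h) - ((u₀, (0:ℂ)) + h).1 ^ s)
        =o[nhds 0] fun h : ℂ × ℂ => h := by
      refine hq2.congr' (by rfl) ?_
      filter_upwards with h
      simp [Function.comp]
    have hsum := hq3.add hf
    refine hsum.congr' ?_ (by rfl)
    filter_upwards with h
    simp only [Pi.add_apply, Prod.fst_add]
    rw [hp0]
    ring
  refine ⟨main, fun hs2 => ?_⟩
  have h := (main 0).fderiv
  rw [h]
  have : (0 : ℂ) ^ (s - 1) = 0 := zero_pow (by omega)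
  rw [this]
  rw [mul_zero]
  ext x <;> simp
end

section
/- Let p : ℂ × ℂ → ℂ and let c, m be real numbers with c > 0 such that p(λ^c • u, λ • v) = λ^m • p(u,v) for all real λ > 0 and all (u,v) ∈ ℂ × ℂ (real powers). Suppose x = (u,v) ≠ (0,0), p(x) = 0, and p is real-differentiable at x. Then the vector w = (c • u, v) satisfies fderiv ℝ p x w = 0 and ⟪x, w⟫ = c·‖u‖² + ‖v‖² > 0. Hence the zero set of p meets the sphere of radius ‖x‖ centred at the origin transversely at x. -/
open Complex

/-- for a weighted homogeneous map `p`, at every nonzero zero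
`x = (u,v)` of `p` where `p` is real-differentiable, the vector `w = (c•u, v)`
lies in the kernel of `fderiv ℝ p x` and `⟪x, w⟫ = c·‖u‖² + ‖v‖² > 0`; hence
the zero set of `p` meets the sphere of radius `‖x‖` transversely at `x`. -/
theorem stmt_9 (p : ℂ × ℂ → ℂ) (c m : ℝ) (hc : 0 < c)
    (hhom : ∀ lam : ℝ, 0 < lam → ∀ u v : ℂ,
      p ((lam ^ c : ℝ) • u, lam • v) = (lam ^ m : ℝ) • p (u, v))
    (u v : ℂ) (hne : (u, v) ≠ (0, 0)) (hzero : p (u, v) = 0)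
    (hdiff : DifferentiableAt ℝ p (u, v)) :
    fderiv ℝ p (u, v) (c • u, v) = 0 ∧
    realInner4 (u, v) (c • u, v) = c * ‖u‖ ^ 2 + ‖v‖ ^ 2 ∧
    0 < c * ‖u‖ ^ 2 + ‖v‖ ^ 2 := by
  refine ⟨?_, ?_, ?_⟩
  · -- kernel part
    set f : ℝ → ℂ := fun t => p ((t ^ c : ℝ) • u, t • v) with hf
    have hγ1 : HasDerivAt (fun t : ℝ => (t ^ c : ℝ) • u) (c • u) 1 := by
      have h := (Real.hasDerivAt_rpow_const (x := (1:ℝ)) (p := c) (Or.inl one_ne_zero))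
      have h2 := h.smul_const u
      simpa using h2
    have hγ2 : HasDerivAt (fun t : ℝ => t • v) v 1 := by
      simpa using (hasDerivAt_id (1:ℝ)).smul_const v
    have hγ : HasDerivAt (fun t : ℝ => ((t ^ c : ℝ) • u, t • v)) (c • u, v) 1 :=
      hγ1.prodMk hγ2
    have hγval : ((1:ℝ) ^ c • u, (1:ℝ) • v) = (u, v) := by simp
    have hF : HasFDerivAt p (fderiv ℝ p (u, v)) (((1:ℝ) ^ c : ℝ) • u, (1:ℝ) • v) :=
      hγval ▸ hdiff.hasFDerivAt
    have hdf : HasDerivAt f (fderiv ℝ p (u, v) (c • u, v)) 1 :=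
      hF.comp_hasDerivAt 1 hγ
    have hzeroev : f =ᶠ[nhds (1:ℝ)] fun _ => (0 : ℂ) := by
      filter_upwards [lt_mem_nhds (show (0:ℝ) < 1 by norm_num)] with t ht
      simp only [hf]
      rw [hhom t ht u v, hzero, smul_zero]
    have hdf0 : HasDerivAt f 0 1 := by
      exact (hasDerivAt_const (1:ℝ) (0:ℂ)).congr_of_eventuallyEq hzeroev
    exact hdf.unique hdf0
  · -- inner product
    have hst : (starRingEnd ℂ) (c • u) = c • (starRingEnd ℂ) u := by
      simp [Complex.ext_iff, Complex.smul_re, Complex.smul_im]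
    simp only [realInner4, hst, mul_smul_comm, Complex.smul_re, Complex.mul_conj]
    rw [Complex.ofReal_re, Complex.ofReal_re, Complex.normSq_eq_norm_sq, Complex.normSq_eq_norm_sq,
      smul_eq_mul]
  · -- positivity
    have h : u ≠ 0 ∨ v ≠ 0 := by
      by_contra h
      push_neg at h
      exact hne (by simp [h.1, h.2])
    rcases h with h | h
    · have : 0 < ‖u‖ := norm_pos_iff.mpr h
      have : 0 < c * ‖u‖ ^ 2 := by positivity
      nlinarith [sq_nonneg ‖v‖]
    · have : 0 < ‖v‖ := norm_pos_iff.mpr h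
      nlinarith [sq_nonneg ‖u‖, mul_nonneg hc.le (sq_nonneg ‖u‖)]
end
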